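/- Let N, s be natural numbers, let V be a type, and let δ : Fin N → V be a sequence whose number of mode transitions K := #{k ∈ {1,…,N−1} : δ(k) ≠ δ(k−1)} is at most K₀. Define the backward temporal shift of δ by s steps as the sequence δ_s : Fin N → V with δ_s(i) = δ(i−s) for i ≥ s and δ_s(i) = δ(0) for i < s. Then the number of time steps at which the shifted sequence differs from the original, #{i ∈ {0,…,N−1} : δ_s(i) ≠ δ(i)}, is at most K₀ · s. -/

import Mathlib

/-- If `δ a ≠ δ b` with `a ≤ b`, there is a transition point in `(a, b]`. -/
lemma exists_transition_between {N : ℕ} {V : Type*} [DecidableEq V] (δ : Fin N → V) :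
    ∀ d : ℕ, ∀ a b : Fin N, (b : ℕ) = (a : ℕ) + d → δ a ≠ δ b →
      ∃ k : Fin N, (a : ℕ) < (k : ℕ) ∧ (k : ℕ) ≤ (b : ℕ) ∧
        δ k ≠ δ ⟨(k : ℕ) - 1, lt_of_le_of_lt (Nat.sub_le _ _) k.isLt⟩ := by
  intro d
  induction d with
  | zero =>
    intro a b hb hne
    exact (hne (congrArg δ (Fin.ext (by omega : (a : ℕ) = (b : ℕ))))).elim
  | succ d ih =>
    intro a b hb hne
    have hb1 : (b : ℕ) - 1 = (a : ℕ) + d := by omega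
    set b' : Fin N := ⟨(b : ℕ) - 1, lt_of_le_of_lt (Nat.sub_le _ _) b.isLt⟩ with hb'
    by_cases h : δ b = δ b'
    · have hne' : δ a ≠ δ b' := by
        intro h'
        exact hne (h'.trans h.symm)
      obtain ⟨k, hk1, hk2, hk3⟩ := ih a b' hb1 hne'
      exact ⟨k, hk1, by simp only [hb'] at hk2; omega, hk3⟩
    · exact ⟨b, by omega, le_refl _, h⟩

theorem backward_shift_diff_card_le {N s : ℕ} {V : Type*} [DecidableEq V] (K₀ : ℕ)
    (δ δs : Fin N → V)
    (hK : ((Finset.univ : Finset (Fin N)).filter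
      (fun k : Fin N => 0 < (k : ℕ) ∧
        δ k ≠ δ ⟨(k : ℕ) - 1, lt_of_le_of_lt (Nat.sub_le _ _) k.isLt⟩)).card ≤ K₀)
    (hshift₁ : ∀ i : Fin N, s ≤ (i : ℕ) →
      δs i = δ ⟨(i : ℕ) - s, lt_of_le_of_lt (Nat.sub_le _ _) i.isLt⟩)
    (hshift₂ : ∀ i : Fin N, (i : ℕ) < s → δs i = δ ⟨0, i.pos⟩) :
    ((Finset.univ : Finset (Fin N)).filter (fun i : Fin N => δs i ≠ δ i)).card ≤ K₀ * s := by
  classical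
  set T := ((Finset.univ : Finset (Fin N)).filter
      (fun k : Fin N => 0 < (k : ℕ) ∧
        δ k ≠ δ ⟨(k : ℕ) - 1, lt_of_le_of_lt (Nat.sub_le _ _) k.isLt⟩)) with hT
  set D := ((Finset.univ : Finset (Fin N)).filter (fun i : Fin N => δs i ≠ δ i)) with hD
  have hsub : D ⊆ T.biUnion (fun k =>
      (Finset.univ : Finset (Fin N)).filter
        (fun i : Fin N => (k : ℕ) ≤ (i : ℕ) ∧ (i : ℕ) < (k : ℕ) + s)) := by
    intro i hi
    simp only [hD, Finset.mem_filter, Finset.mem_univ, true_and] at hi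
    have hex : ∃ k : Fin N, (k : ℕ) ≤ (i : ℕ) ∧ (i : ℕ) < (k : ℕ) + s ∧ 0 < (k : ℕ) ∧
        δ k ≠ δ ⟨(k : ℕ) - 1, lt_of_le_of_lt (Nat.sub_le _ _) k.isLt⟩ := by
      by_cases hs : s ≤ (i : ℕ)
      · have h1 := hshift₁ i hs
        set a : Fin N := ⟨(i : ℕ) - s, lt_of_le_of_lt (Nat.sub_le _ _) i.isLt⟩ with ha
        have hne : δ a ≠ δ i := fun h => hi (h1.trans h)
        obtain ⟨k, hk1, hk2, hk3⟩ := exists_transition_between δ s a i (by simp [ha]; omega) hne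
        refine ⟨k, hk2, ?_, ?_, hk3⟩ <;> simp only [ha] at hk1 <;> omega
      · push_neg at hs
        have h1 := hshift₂ i hs
        set a : Fin N := ⟨0, i.pos⟩ with ha
        have hne : δ a ≠ δ i := fun h => hi (h1.trans h)
        obtain ⟨k, hk1, hk2, hk3⟩ := exists_transition_between δ (i : ℕ) a i (by simp [ha]) hne
        refine ⟨k, hk2, by omega, ?_, hk3⟩
        simp only [ha] at hk1; omega
    obtain ⟨k, hk1, hk2, hk3, hk4⟩ := hex
    refine Finset.mem_biUnion.mpr ⟨k, ?_, ?_⟩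
    · simp only [hT, Finset.mem_filter, Finset.mem_univ, true_and]; exact ⟨hk3, hk4⟩
    · simp only [Finset.mem_filter, Finset.mem_univ, true_and]; exact ⟨hk1, hk2⟩
  calc D.card ≤ _ := Finset.card_le_card hsub
    _ ≤ ∑ k ∈ T, ((Finset.univ : Finset (Fin N)).filter
        (fun i : Fin N => (k : ℕ) ≤ (i : ℕ) ∧ (i : ℕ) < (k : ℕ) + s)).card :=
      Finset.card_biUnion_le
    _ ≤ ∑ _k ∈ T, s := by
      refine Finset.sum_le_sum fun k _ => ?_
      have : ((Finset.univ : Finset (Fin N)).filter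
          (fun i : Fin N => (k : ℕ) ≤ (i : ℕ) ∧ (i : ℕ) < (k : ℕ) + s)).card
          ≤ (Finset.range s).card := by
        refine Finset.card_le_card_of_injOn (fun i : Fin N => (i : ℕ) - (k : ℕ)) ?_ ?_
        · intro i hi
          simp only [Finset.mem_coe, Finset.mem_filter, Finset.mem_univ, true_and] at hi
          simp only [Finset.mem_coe, Finset.mem_range]; omega
        · intro i hi j hj hij
          simp only [Finset.mem_coe, Finset.mem_filter, Finset.mem_univ, true_and] at hi hj
          dsimp only at hij; exact Fin.ext (by omega)
      simpa using this
    _ = T.card * s := by simp [Finset.sum_const, mul_comm]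
    _ ≤ K₀ * s := Nat.mul_le_mul_right s hK
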